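/- For every natural number k ≥ 1, the number of elements of NC₂°(k) equals (4/π) · ∫₀^{π/2} (4·cos²θ − 1)^k · sin²θ dθ. -/

import Mathlib

/-- `P` is a perfect matching of `{1, …, 2k}`: a partition of `{1, …, 2k}`
into blocks of size `2`. -/
def IsPerfectMatching (k : ℕ) (P : Finset (Finset ℕ)) : Prop :=
  (∀ B ∈ P, B.card = 2) ∧ (∀ B ∈ P, B ⊆ Finset.Icc 1 (2 * k)) ∧
    ∀ i ∈ Finset.Icc 1 (2 * k), ∃! B : Finset ℕ, B ∈ P ∧ i ∈ B

/-- A matching is noncrossing if there are no `a < b < c < d` with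
`{a, c}` and `{b, d}` both blocks. -/
def IsNoncrossing (P : Finset (Finset ℕ)) : Prop :=
  ∀ a b c d : ℕ, a < b → b < c → c < d →
    ({a, c} : Finset ℕ) ∈ P → ({b, d} : Finset ℕ) ∉ P

/-- `NC₂°(k)`: noncrossing perfect matchings of `{1, …, 2k}` with no block of
the form `{2j - 1, 2j}` for `1 ≤ j ≤ k`. -/
def NCtwoCirc (k : ℕ) : Set (Finset (Finset ℕ)) :=
  {P | IsPerfectMatching k P ∧ IsNoncrossing P ∧
    ∀ j : ℕ, 1 ≤ j → j ≤ k → ({2 * j - 1, 2 * j} : Finset ℕ) ∉ P}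

open Finset Real Nat intervalIntegral MeasureTheory

lemma CB_succ_eq (m : ℕ) :
    Nat.centralBinom (m+1) = 2*(2*m+1) * catalan m := by
  have h1 := Nat.succ_mul_centralBinom_succ m
  have h2 := succ_mul_catalan_eq_centralBinom m
  have : (m+1) * Nat.centralBinom (m+1) = (m+1) * (2*(2*m+1) * catalan m) := by
    rw [h1, ← h2]; ring
  exact Nat.eq_of_mul_eq_mul_left (Nat.succ_pos m) this

lemma CB_eq (m : ℕ) : Nat.centralBinom m = (m+1) * catalan m :=
  (succ_mul_catalan_eq_centralBinom m).symm ▸ by ring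

lemma cos_pow_int (m : ℕ) :
    ∫ x in (0:ℝ)..(Real.pi/2), Real.cos x ^ (2*m)
      = Real.pi/2 * (Nat.centralBinom m) / 4^m := by
  induction m with
  | zero => simp
  | succ m ih =>
    have h : 2*(m+1) = 2*m + 2 := by ring
    rw [h, integral_cos_pow (2*m)]
    rw [Real.cos_pi_div_two, Real.sin_zero, ih]
    have e1 : ((Nat.centralBinom (m+1) : ℕ) : ℝ) = 2*(2*(m:ℝ)+1) * (catalan m) := by
      exact_mod_cast congrArg (Nat.cast : ℕ → ℝ) (CB_succ_eq m)
    have e2 : ((Nat.centralBinom m : ℕ) : ℝ) = ((m:ℝ)+1) * (catalan m) := by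
      exact_mod_cast congrArg (Nat.cast : ℕ → ℝ) (CB_eq m)
    rw [e1, e2]
    have h4 : (4:ℝ)^m ≠ 0 := by positivity
    have h2' : ((2*m:ℕ):ℝ) + 2 ≠ 0 := by positivity
    push_cast
    field_simp
    ring

lemma J_int (m : ℕ) :
    ∫ x in (0:ℝ)..(Real.pi/2), Real.cos x ^ (2*m) * Real.sin x ^ 2
      = Real.pi/4 * (catalan m) / 4^m := by
  have hint : ∀ n : ℕ, IntervalIntegrable (fun x => Real.cos x ^ n) MeasureTheory.volume 0 (Real.pi/2) := by
    intro n; apply Continuous.intervalIntegrable; fun_prop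
  have heq : ∀ x : ℝ, Real.cos x ^ (2*m) * Real.sin x ^ 2
      = Real.cos x ^ (2*m) - Real.cos x ^ (2*(m+1)) := by
    intro x
    have hpyth := Real.sin_sq_add_cos_sq x
    have h : 2*(m+1) = 2*m + 2 := by ring
    rw [h, pow_add]
    linear_combination (Real.cos x ^ (2*m)) * hpyth
  rw [intervalIntegral.integral_congr (fun x _ => heq x),
    intervalIntegral.integral_sub (hint (2*m)) (hint (2*(m+1))), cos_pow_int, cos_pow_int]
  have e1 : ((Nat.centralBinom (m+1) : ℕ) : ℝ) = 2*(2*(m:ℝ)+1) * (catalan m) := by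
    exact_mod_cast congrArg (Nat.cast : ℕ → ℝ) (CB_succ_eq m)
  have e2 : ((Nat.centralBinom m : ℕ) : ℝ) = ((m:ℝ)+1) * (catalan m) := by
    exact_mod_cast congrArg (Nat.cast : ℕ → ℝ) (CB_eq m)
  rw [e1, e2, pow_succ]
  have h4 : (4:ℝ)^m ≠ 0 := by positivity
  field_simp
  ring

lemma integral_eval (k : ℕ) :
    (∫ θ in (0:ℝ)..(Real.pi / 2),
        (4 * Real.cos θ ^ 2 - 1) ^ k * Real.sin θ ^ 2)
      = Real.pi/4 * ∑ m ∈ Finset.range (k+1),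
          ((-1:ℝ))^(k-m) * (k.choose m) * (catalan m) := by
  have heq : ∀ θ : ℝ, (4 * Real.cos θ ^ 2 - 1) ^ k * Real.sin θ ^ 2
      = ∑ m ∈ Finset.range (k+1),
          ((-1:ℝ))^(k-m) * (k.choose m) * 4^m * (Real.cos θ ^ (2*m) * Real.sin θ ^ 2) := by
    intro θ
    have hb := add_pow (4 * Real.cos θ ^ 2) (-1 : ℝ) k
    have h1 : (4 * Real.cos θ ^ 2 - 1) ^ k = (4 * Real.cos θ ^ 2 + (-1)) ^ k := by ring_nf
    rw [h1, hb, Finset.sum_mul]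
    refine Finset.sum_congr rfl fun m hm => ?_
    rw [mul_pow, pow_mul]
    ring
  rw [intervalIntegral.integral_congr (fun θ _ => heq θ)]
  rw [intervalIntegral.integral_finset_sum]
  · rw [Finset.mul_sum]
    refine Finset.sum_congr rfl fun m hm => ?_
    rw [intervalIntegral.integral_const_mul, J_int]
    have h4 : (4:ℝ)^m ≠ 0 := by positivity
    field_simp
  · intro m hm
    apply Continuous.intervalIntegrable
    fun_prop


/-- perfect matching of an arbitrary finite set -/
def IsPM (S : Finset ℕ) (P : Finset (Finset ℕ)) : Prop :=
  (∀ B ∈ P, B.card = 2) ∧ (∀ B ∈ P, B ⊆ S) ∧ ∀ i ∈ S, ∃! B : Finset ℕ, B ∈ P ∧ i ∈ B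

open scoped Classical in
noncomputable def NCM (S : Finset ℕ) : Finset (Finset (Finset ℕ)) :=
  S.powerset.powerset.filter (fun P => IsPM S P ∧ IsNoncrossing P)

lemma mem_NCM {S : Finset ℕ} {P : Finset (Finset ℕ)} :
    P ∈ NCM S ↔ IsPM S P ∧ IsNoncrossing P := by
  classical
  constructor
  · intro h; exact ((mem_filter.mp h).2.imp id id)
  · intro h
    rw [NCM]
    rw [mem_filter, mem_powerset]
    refine ⟨fun B hB => ?_, h⟩
    exact mem_powerset.mpr (h.1.2.1 B hB)

lemma IsNoncrossing.subset {P Q : Finset (Finset ℕ)} (h : Q ⊆ P)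
    (hP : IsNoncrossing P) : IsNoncrossing Q :=
  fun a b c d h1 h2 h3 hac hbd => hP a b c d h1 h2 h3 (h hac) (h hbd)

lemma pair_card {a b : ℕ} (h : a ≠ b) : ({a, b} : Finset ℕ).card = 2 := by
  rw [card_insert_of_notMem (by simpa using h), card_singleton]

lemma pair_eq_pair_iff {x z a b : ℕ} (hxz : x < z) (hab : a < b) :
    ({x, z} : Finset ℕ) = {a, b} ↔ x = a ∧ z = b := by
  constructor
  · intro h
    have hx : x ∈ ({a, b} : Finset ℕ) := h ▸ (by simp)
    have hz : z ∈ ({a, b} : Finset ℕ) := h ▸ (by simp)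
    have ha : a ∈ ({x, z} : Finset ℕ) := h ▸ (by simp)
    simp only [mem_insert, mem_singleton] at hx hz ha
    omega
  · rintro ⟨rfl, rfl⟩; rfl

lemma block_eq_pair {B : Finset ℕ} (h2 : B.card = 2) {a : ℕ} (ha : a ∈ B) :
    ∃ b, b ≠ a ∧ B = {a, b} := by
  obtain ⟨x, y, hxy, rfl⟩ := Finset.card_eq_two.mp h2
  simp only [mem_insert, mem_singleton] at ha
  rcases ha with rfl | rfl
  · exact ⟨y, hxy.symm, rfl⟩
  · exact ⟨x, hxy, by rw [Finset.pair_comm]⟩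

/-- the cardinality of a perfectly matched set is twice the number of blocks -/
lemma IsPM.card_eq {S : Finset ℕ} {P : Finset (Finset ℕ)} (h : IsPM S P) :
    S.card = 2 * P.card := by
  classical
  have hS : S = P.biUnion id := by
    ext i
    simp only [mem_biUnion, id]
    constructor
    · intro hi
      obtain ⟨B, hB, -⟩ := h.2.2 i hi
      exact ⟨B, hB.1, hB.2⟩
    · rintro ⟨B, hB, hiB⟩
      exact h.2.1 B hB hiB
  have hdisj : ∀ B ∈ P, ∀ C ∈ P, B ≠ C → Disjoint (id B) (id C) := by
    intro B hB C hC hne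
    rw [Finset.disjoint_left]
    intro i hiB hiC
    have hiS : i ∈ S := h.2.1 B hB hiB
    obtain ⟨U, -, hU⟩ := h.2.2 i hiS
    exact hne ((hU B ⟨hB, hiB⟩).trans (hU C ⟨hC, hiC⟩).symm)
  rw [hS, card_biUnion hdisj]
  simp only [id]
  rw [Finset.sum_congr rfl (fun B hB => h.1 B hB), Finset.sum_const, smul_eq_mul]
  ring

lemma NCM_eq_empty_of_odd {S : Finset ℕ} (h : Odd S.card) : NCM S = ∅ := by
  rw [Finset.eq_empty_iff_forall_notMem]
  intro P hP
  have := (mem_NCM.mp hP).1.card_eq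
  obtain ⟨t, ht⟩ := h
  omega

lemma NCM_empty : NCM ∅ = {∅} := by
  ext P
  rw [mem_NCM]
  simp only [Finset.mem_singleton]
  constructor
  · rintro ⟨⟨h2, hsub, -⟩, -⟩
    rw [Finset.eq_empty_iff_forall_notMem]
    intro B hB
    have hc := h2 B hB
    have he := Finset.subset_empty.mp (hsub B hB)
    rw [he] at hc
    simp at hc
  · rintro rfl
    refine ⟨⟨by simp, by simp, by simp⟩, ?_⟩
    intro a b c d _ _ _ h
    simp at h

section Glue

variable {S : Finset ℕ} {a b : ℕ}

/-- every block other than `{a,b}` lies entirely between `a` and `b` or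
entirely above `b` -/
lemma block_side (hP : P ∈ NCM S) (hab : ({a,b} : Finset ℕ) ∈ P) (hab' : a < b)
    (hmin : ∀ x ∈ S, a ≤ x) {B : Finset ℕ} (hB : B ∈ P) (hne : B ≠ ({a,b} : Finset ℕ)) :
    (∀ x ∈ B, a < x ∧ x < b) ∨ (∀ x ∈ B, b < x) := by
  obtain ⟨hPM, hNC⟩ := mem_NCM.mp hP
  obtain ⟨x, y, hxy, rfl⟩ := Finset.card_eq_two.mp (hPM.1 B hB)
  have hxS : x ∈ S := hPM.2.1 _ hB (by simp)
  have hyS : y ∈ S := hPM.2.1 _ hB (by simp)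
  have haS : a ∈ S := hPM.2.1 _ hab (by simp)
  have hbS : b ∈ S := hPM.2.1 _ hab (by simp)
  -- x and y differ from a and b
  have hkey : ∀ z w : ℕ, ({z,w} : Finset ℕ) ∈ P → z ≠ a ∧ z ≠ b ∨ ({z,w} : Finset ℕ) = {a,b} := by
    intro z w hzw
    by_cases hz : z = a ∨ z = b
    · right
      rcases hz with rfl | rfl
      · obtain ⟨U, -, hU⟩ := hPM.2.2 z (hPM.2.1 _ hzw (by simp))
        exact (hU _ ⟨hzw, by simp⟩).trans (hU _ ⟨hab, by simp⟩).symm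
      · obtain ⟨U, -, hU⟩ := hPM.2.2 z (hPM.2.1 _ hzw (by simp))
        exact (hU _ ⟨hzw, by simp⟩).trans (hU _ ⟨hab, by simp⟩).symm
    · left; exact ⟨fun h => hz (Or.inl h), fun h => hz (Or.inr h)⟩
  have hx' : x ≠ a ∧ x ≠ b := by
    rcases hkey x y hB with h | h
    · exact h
    · exact absurd h hne
  have hy' : y ≠ a ∧ y ≠ b := by
    rcases hkey y x (by rwa [Finset.pair_comm]) with h | h
    · exact h
    · exact absurd (by rwa [Finset.pair_comm] at h) hne
  have hax : a < x := lt_of_le_of_ne (hmin x hxS) (Ne.symm hx'.1)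
  have hay : a < y := lt_of_le_of_ne (hmin y hyS) (Ne.symm hy'.1)
  -- no straddling
  have hcross : ∀ z w : ℕ, a < z → z < b → b < w → ({z,w} : Finset ℕ) ∈ P → False :=
    fun z w h1 h2 h3 hm => hNC a z b w h1 h2 h3 hab hm
  have hxb : x ≠ b := hx'.2
  have hyb : y ≠ b := hy'.2
  rcases lt_or_gt_of_ne hxb with h1 | h1 <;> rcases lt_or_gt_of_ne hyb with h2 | h2
  · left
    intro z hz
    simp only [Finset.mem_insert, Finset.mem_singleton] at hz
    rcases hz with rfl | rfl <;> omega
  · exact absurd (hcross x y hax h1 h2 hB) id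
  · exact absurd (hcross y x hay h2 h1 (by rwa [Finset.pair_comm] at hB)) id
  · right
    intro z hz
    simp only [Finset.mem_insert, Finset.mem_singleton] at hz
    rcases hz with rfl | rfl <;> omega

lemma glue_mem (haS : a ∈ S) (hbS : b ∈ S) (hab : a < b) (hmin : ∀ x ∈ S, a ≤ x)
    {P₁ P₂ : Finset (Finset ℕ)}
    (h₁ : P₁ ∈ NCM (S.filter (fun x => a < x ∧ x < b)))
    (h₂ : P₂ ∈ NCM (S.filter (fun x => b < x))) :
    insert ({a,b} : Finset ℕ) (P₁ ∪ P₂) ∈ NCM S := by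
  obtain ⟨hPM₁, hNC₁⟩ := mem_NCM.mp h₁
  obtain ⟨hPM₂, hNC₂⟩ := mem_NCM.mp h₂
  have mem1 : ∀ {B : Finset ℕ}, B ∈ P₁ → ∀ x ∈ B, x ∈ S ∧ a < x ∧ x < b := by
    intro B hB x hx
    have := hPM₁.2.1 B hB hx
    simp only [Finset.mem_filter] at this
    exact ⟨this.1, this.2⟩
  have mem2 : ∀ {B : Finset ℕ}, B ∈ P₂ → ∀ x ∈ B, x ∈ S ∧ b < x := by
    intro B hB x hx
    have := hPM₂.2.1 B hB hx
    simp only [Finset.mem_filter] at this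
    exact ⟨this.1, this.2⟩
  have hpairne : ∀ B ∈ P₁ ∪ P₂, B ≠ ({a,b} : Finset ℕ) := by
    intro B hB heq
    have ha : a ∈ B := heq ▸ (by simp)
    rcases Finset.mem_union.mp hB with h | h
    · exact absurd (mem1 h a ha).2.1 (lt_irrefl a)
    · exact absurd (mem2 h a ha).2 (by omega)
  rw [mem_NCM]
  constructor
  · refine ⟨?_, ?_, ?_⟩
    · intro B hB
      rcases Finset.mem_insert.mp hB with rfl | hB
      · exact pair_card (by omega)
      · rcases Finset.mem_union.mp hB with h | h
        · exact hPM₁.1 B h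
        · exact hPM₂.1 B h
    · intro B hB
      rcases Finset.mem_insert.mp hB with rfl | hB
      · intro x hx
        simp only [Finset.mem_insert, Finset.mem_singleton] at hx
        rcases hx with rfl | rfl <;> assumption
      · rcases Finset.mem_union.mp hB with h | h
        · exact fun x hx => (mem1 h x hx).1
        · exact fun x hx => (mem2 h x hx).1
    · intro i hi
      have htri : i = a ∨ i = b ∨ (a < i ∧ i < b) ∨ b < i := by
        have := hmin i hi; omega
      rcases htri with rfl | rfl | hmid | hup
      · refine ⟨{i, b}, ⟨Finset.mem_insert_self _ _, by simp⟩, ?_⟩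
        rintro B ⟨hB, hiB⟩
        rcases Finset.mem_insert.mp hB with rfl | hB
        · rfl
        · exact absurd (hpairne B hB) (by
            rcases Finset.mem_union.mp hB with h | h
            · exact absurd (mem1 h i hiB).2.1 (lt_irrefl i)
            · exact absurd (mem2 h i hiB).2 (by omega))
      · refine ⟨{a, i}, ⟨Finset.mem_insert_self _ _, by simp⟩, ?_⟩
        rintro B ⟨hB, hiB⟩
        rcases Finset.mem_insert.mp hB with rfl | hB
        · rfl
        · exact absurd (hpairne B hB) (by
            rcases Finset.mem_union.mp hB with h | h
            · exact absurd (mem1 h i hiB).2.2 (lt_irrefl i)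
            · exact absurd (mem2 h i hiB).2 (lt_irrefl i))
      · obtain ⟨B, ⟨hB, hiB⟩, hU⟩ := hPM₁.2.2 i (by simp [Finset.mem_filter, hi, hmid])
        refine ⟨B, ⟨Finset.mem_insert_of_mem (Finset.mem_union_left _ hB), hiB⟩, ?_⟩
        rintro C ⟨hC, hiC⟩
        rcases Finset.mem_insert.mp hC with rfl | hC
        · exfalso
          simp only [Finset.mem_insert, Finset.mem_singleton] at hiC
          omega
        · rcases Finset.mem_union.mp hC with h | h
          · exact hU C ⟨h, hiC⟩
          · exact absurd (mem2 h i hiC).2 (by omega)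
      · obtain ⟨B, ⟨hB, hiB⟩, hU⟩ := hPM₂.2.2 i (by simp [Finset.mem_filter, hi, hup])
        refine ⟨B, ⟨Finset.mem_insert_of_mem (Finset.mem_union_right _ hB), hiB⟩, ?_⟩
        rintro C ⟨hC, hiC⟩
        rcases Finset.mem_insert.mp hC with rfl | hC
        · exfalso
          simp only [Finset.mem_insert, Finset.mem_singleton] at hiC
          omega
        · rcases Finset.mem_union.mp hC with h | h
          · exact absurd (mem1 h i hiC).2.2 (by omega)
          · exact hU C ⟨h, hiC⟩
  · -- noncrossing
    intro x y z w h1 h2 h3 hxz hyw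
    have hxz' := Finset.mem_insert.mp hxz
    have hyw' := Finset.mem_insert.mp hyw
    rcases hxz' with e1 | m1
    · obtain ⟨rfl, rfl⟩ := (pair_eq_pair_iff (by omega) hab).mp e1
      rcases hyw' with e2 | m2
      · obtain ⟨h, -⟩ := (pair_eq_pair_iff (by omega) hab).mp e2
        omega
      · rcases Finset.mem_union.mp m2 with h | h
        · have := (mem1 h w (by simp)).2.2; omega
        · have := (mem2 h y (by simp)).2; omega
    · rcases hyw' with e2 | m2
      · obtain ⟨rfl, rfl⟩ := (pair_eq_pair_iff (by omega) hab).mp e2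
        rcases Finset.mem_union.mp m1 with h | h
        · have := (mem1 h x (by simp)).2.1; omega
        · have := (mem2 h x (by simp)).2; omega
      · rcases Finset.mem_union.mp m1 with h | h <;> rcases Finset.mem_union.mp m2 with h' | h'
        · exact hNC₁ x y z w h1 h2 h3 h h'
        · have := (mem1 h z (by simp)).2.2
          have := (mem2 h' y (by simp)).2
          omega
        · have := (mem2 h x (by simp)).2
          have := (mem1 h' w (by simp)).2.2
          omega
        · exact hNC₂ x y z w h1 h2 h3 h h'

lemma card_filter_pair (haS : a ∈ S) (hbS : b ∈ S) (hab : a < b) (hmin : ∀ x ∈ S, a ≤ x) :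
    ((NCM S).filter (fun P => ({a,b} : Finset ℕ) ∈ P)).card
      = (NCM (S.filter (fun x => a < x ∧ x < b))).card
          * (NCM (S.filter (fun x => b < x))).card := by
  classical
  set S₁ := S.filter (fun x => a < x ∧ x < b) with hS₁
  set S₂ := S.filter (fun x => b < x) with hS₂
  have haS₁ : a ∉ S₁ := by simp [hS₁]
  have memS₁ : ∀ {x}, x ∈ S₁ ↔ x ∈ S ∧ a < x ∧ x < b := by
    intro x; simp [hS₁]
  have memS₂ : ∀ {x}, x ∈ S₂ ↔ x ∈ S ∧ b < x := by
    intro x; simp [hS₂]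
  -- key: for P in the filter set, every block is {a,b} or inside S₁ or S₂
  have hside : ∀ {P}, P ∈ NCM S → ({a,b} : Finset ℕ) ∈ P → ∀ {B}, B ∈ P →
      B = ({a,b} : Finset ℕ) ∨ B ⊆ S₁ ∨ B ⊆ S₂ := by
    intro P hP hmem B hB
    by_cases hne : B = ({a,b} : Finset ℕ)
    · exact Or.inl hne
    · rcases block_side hP hmem hab hmin hB hne with h | h
      · refine Or.inr (Or.inl fun x hx => memS₁.mpr ⟨(mem_NCM.mp hP).1.2.1 B hB hx, h x hx⟩)
      · refine Or.inr (Or.inr fun x hx => memS₂.mpr ⟨(mem_NCM.mp hP).1.2.1 B hB hx, h x hx⟩)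
  have habS₁ : ¬ (({a,b} : Finset ℕ) ⊆ S₁) := fun h => haS₁ (h (by simp))
  have habS₂ : ¬ (({a,b} : Finset ℕ) ⊆ S₂) := by
    intro h
    have := memS₂.mp (h (by simp : a ∈ ({a,b} : Finset ℕ)))
    omega
  have hS₁S₂ : ∀ {B : Finset ℕ}, B.Nonempty → B ⊆ S₁ → B ⊆ S₂ → False := by
    rintro B ⟨x, hx⟩ h1 h2
    have := memS₁.mp (h1 hx)
    have := memS₂.mp (h2 hx)
    omega
  rw [← Finset.card_product]
  refine Finset.card_nbij'
    (fun P => (P.filter (· ⊆ S₁), P.filter (· ⊆ S₂)))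
    (fun p => insert ({a,b} : Finset ℕ) (p.1 ∪ p.2)) ?_ ?_ ?_ ?_
  · -- split maps into the product
    intro P hP
    rw [Finset.mem_coe, Finset.mem_filter] at hP
    obtain ⟨hP, hmem⟩ := hP
    obtain ⟨hPM, hNC⟩ := mem_NCM.mp hP
    rw [Finset.mem_coe, Finset.mem_product]
    constructor
    · rw [mem_NCM]
      refine ⟨⟨?_, ?_, ?_⟩, hNC.subset (Finset.filter_subset _ _)⟩
      · exact fun B hB => hPM.1 B (Finset.mem_of_mem_filter _ hB)
      · exact fun B hB => (Finset.mem_filter.mp hB).2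
      · intro i hi
        obtain ⟨hiS, hia, hib⟩ := memS₁.mp hi
        obtain ⟨B, ⟨hB, hiB⟩, hU⟩ := hPM.2.2 i hiS
        have hBS₁ : B ⊆ S₁ := by
          rcases hside hP hmem hB with rfl | h | h
          · exfalso
            simp only [Finset.mem_insert, Finset.mem_singleton] at hiB
            omega
          · exact h
          · exfalso
            have := memS₂.mp (h hiB)
            omega
        exact ⟨B, ⟨Finset.mem_filter.mpr ⟨hB, hBS₁⟩, hiB⟩,
          fun C hC => hU C ⟨Finset.mem_of_mem_filter _ hC.1, hC.2⟩⟩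
    · rw [mem_NCM]
      refine ⟨⟨?_, ?_, ?_⟩, hNC.subset (Finset.filter_subset _ _)⟩
      · exact fun B hB => hPM.1 B (Finset.mem_of_mem_filter _ hB)
      · exact fun B hB => (Finset.mem_filter.mp hB).2
      · intro i hi
        obtain ⟨hiS, hib⟩ := memS₂.mp hi
        obtain ⟨B, ⟨hB, hiB⟩, hU⟩ := hPM.2.2 i hiS
        have hBS₂ : B ⊆ S₂ := by
          rcases hside hP hmem hB with rfl | h | h
          · exfalso
            simp only [Finset.mem_insert, Finset.mem_singleton] at hiB
            omega
          · exfalso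
            have := memS₁.mp (h hiB)
            omega
          · exact h
        exact ⟨B, ⟨Finset.mem_filter.mpr ⟨hB, hBS₂⟩, hiB⟩,
          fun C hC => hU C ⟨Finset.mem_of_mem_filter _ hC.1, hC.2⟩⟩
  · -- glue maps into the filter set
    rintro ⟨P₁, P₂⟩ hp
    rw [Finset.mem_coe, Finset.mem_product] at hp
    exact Finset.mem_filter.mpr ⟨glue_mem haS hbS hab hmin hp.1 hp.2,
      Finset.mem_insert_self _ _⟩
  · -- glue ∘ split = id
    intro P hP
    rw [Finset.mem_coe, Finset.mem_filter] at hP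
    obtain ⟨hP, hmem⟩ := hP
    ext B
    simp only [Finset.mem_insert, Finset.mem_union, Finset.mem_filter]
    constructor
    · rintro (rfl | ⟨hB, -⟩ | ⟨hB, -⟩) <;> first | exact hmem | exact hB
    · intro hB
      rcases hside hP hmem hB with rfl | h | h
      · exact Or.inl rfl
      · exact Or.inr (Or.inl ⟨hB, h⟩)
      · exact Or.inr (Or.inr ⟨hB, h⟩)
  · -- split ∘ glue = id
    rintro ⟨P₁, P₂⟩ hp
    rw [Finset.mem_coe, Finset.mem_product] at hp
    obtain ⟨hPM₁, -⟩ := mem_NCM.mp hp.1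
    obtain ⟨hPM₂, -⟩ := mem_NCM.mp hp.2
    have hB1 : ∀ B ∈ P₁, B ⊆ S₁ := hPM₁.2.1
    have hB2 : ∀ B ∈ P₂, B ⊆ S₂ := hPM₂.2.1
    have hne : ∀ {B : Finset ℕ}, B ∈ P₁ ∪ P₂ → B.Nonempty := by
      intro B hB
      rcases Finset.mem_union.mp hB with h | h
      · exact Finset.card_pos.mp (by rw [hPM₁.1 B h]; omega)
      · exact Finset.card_pos.mp (by rw [hPM₂.1 B h]; omega)
    refine Prod.ext ?_ ?_
    · ext B
      simp only [Finset.mem_filter, Finset.mem_insert, Finset.mem_union]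
      constructor
      · rintro ⟨rfl | hB | hB, hsub⟩
        · exact absurd hsub habS₁
        · exact hB
        · exact absurd (hS₁S₂ (hne (Finset.mem_union_right _ hB)) hsub (hB2 B hB)) id
      · intro hB
        exact ⟨Or.inr (Or.inl hB), hB1 B hB⟩
    · ext B
      simp only [Finset.mem_filter, Finset.mem_insert, Finset.mem_union]
      constructor
      · rintro ⟨rfl | hB | hB, hsub⟩
        · exact absurd hsub habS₂
        · exact absurd (hS₁S₂ (hne (Finset.mem_union_left _ hB)) (hB1 B hB) hsub) id
        · exact hB
      · intro hB
        exact ⟨Or.inr (Or.inr hB), hB2 B hB⟩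

end Glue

lemma card_NCM_eq_sum {S : Finset ℕ} (hne : S.Nonempty) :
    (NCM S).card = ∑ b ∈ S.erase (S.min' hne),
      ((NCM S).filter (fun P => ({S.min' hne, b} : Finset ℕ) ∈ P)).card := by
  classical
  set a := S.min' hne with ha
  have hcover : NCM S = (S.erase a).biUnion
      (fun b => (NCM S).filter (fun P => ({a,b} : Finset ℕ) ∈ P)) := by
    ext P
    simp only [Finset.mem_biUnion, Finset.mem_filter]
    constructor
    · intro hP
      obtain ⟨hPM, hNC⟩ := mem_NCM.mp hP
      obtain ⟨B, ⟨hB, haB⟩, hU⟩ := hPM.2.2 a (S.min'_mem hne)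
      obtain ⟨b, hba, rfl⟩ := block_eq_pair (hPM.1 B hB) haB
      have hbS : b ∈ S := hPM.2.1 _ hB (by simp)
      exact ⟨b, Finset.mem_erase.mpr ⟨hba, hbS⟩, hP, hB⟩
    · rintro ⟨b, -, hP, -⟩; exact hP
  conv_lhs => rw [hcover]
  apply Finset.card_biUnion
  intro b hb c hc hbc
  rw [Finset.mem_coe] at hb; rw [Function.onFun, Finset.disjoint_left]
  intro P hPb hPc
  rw [Finset.mem_filter] at hPb hPc
  obtain ⟨hP, hmb⟩ := hPb
  obtain ⟨-, hmc⟩ := hPc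
  obtain ⟨hPM, -⟩ := mem_NCM.mp hP
  obtain ⟨U, -, hU⟩ := hPM.2.2 a (S.min'_mem hne)
  have heq : ({a,b} : Finset ℕ) = {a,c} :=
    (hU ({a,b} : Finset ℕ) ⟨hmb, by simp⟩).trans (hU ({a,c} : Finset ℕ) ⟨hmc, by simp⟩).symm
  have : b ∈ ({a,c} : Finset ℕ) := heq ▸ (by simp)
  simp only [Finset.mem_insert, Finset.mem_singleton] at this
  rcases this with rfl | rfl
  · exact (Finset.mem_erase.mp hb).1 rfl
  · exact hbc rfl

theorem card_NCM : ∀ n (S : Finset ℕ), S.card = 2*n → (NCM S).card = catalan n := by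
  intro n
  induction n using Nat.strong_induction_on with
  | _ n IH =>
  rcases n with _ | n
  · intro S hS
    rw [Finset.card_eq_zero.mp (by omega : S.card = 0), NCM_empty]
    simp [catalan]
  · intro S hS
    have hne : S.Nonempty := Finset.card_pos.mp (by omega)
    set a := S.min' hne with ha
    have haS : a ∈ S := S.min'_mem hne
    have hmin : ∀ x ∈ S, a ≤ x := fun x hx => S.min'_le x hx
    set pos : ℕ → ℕ := fun b => (S.filter (· < b)).card with hpos
    have hmono : ∀ x ∈ S, ∀ y : ℕ, x < y → pos x < pos y := by
      intro x hx y hxy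
      refine Finset.card_lt_card ⟨fun z hz => ?_, fun hcon => ?_⟩
      · rw [Finset.mem_filter] at hz ⊢
        exact ⟨hz.1, by omega⟩
      · have := Finset.mem_filter.mp (hcon (Finset.mem_filter.mpr ⟨hx, hxy⟩))
        omega
    have hinj : ∀ x ∈ S, ∀ y ∈ S, pos x = pos y → x = y := by
      intro x hx y hy hxy
      rcases lt_trichotomy x y with h | h | h
      · exact absurd hxy (by have := hmono x hx y h; omega)
      · exact h
      · exact absurd hxy (by have := hmono y hy x h; omega)
    have hlt : ∀ b ∈ S, pos b < 2*(n+1) := by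
      intro b hb
      rw [← hS]
      apply Finset.card_lt_card
      rw [Finset.ssubset_iff_of_subset (Finset.filter_subset _ _)]
      exact ⟨b, hb, by simp⟩
    have hpos1 : ∀ b ∈ S.erase a, 1 ≤ pos b := by
      intro b hb
      rw [Finset.mem_erase] at hb
      have hab : a < b := lt_of_le_of_ne (hmin b hb.2) (Ne.symm hb.1)
      have : a ∈ S.filter (· < b) := Finset.mem_filter.mpr ⟨haS, hab⟩
      exact Finset.card_pos.mpr ⟨a, this⟩
    have himerase : Finset.image pos (S.erase a) = Finset.Icc 1 (2*n+1) := by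
      apply Finset.eq_of_subset_of_card_le
      · intro j hj
        obtain ⟨b, hb, rfl⟩ := Finset.mem_image.mp hj
        have h1 := hpos1 b hb
        have h2 := hlt b (Finset.mem_of_mem_erase hb)
        rw [Finset.mem_Icc]; omega
      · rw [Nat.card_Icc]
        rw [Finset.card_image_of_injOn
          (fun x hx y hy => hinj x (Finset.mem_of_mem_erase hx) y (Finset.mem_of_mem_erase hy))]
        rw [Finset.card_erase_of_mem haS, hS]
        omega
    -- evaluate each fiber
    have hfib : ∀ b ∈ S.erase a,
        ((NCM S).filter (fun P => ({a,b} : Finset ℕ) ∈ P)).card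
          = (fun j => if Odd j then catalan (j/2) * catalan (n - j/2) else 0) (pos b) := by
      intro b hb
      rw [Finset.mem_erase] at hb
      have hab : a < b := lt_of_le_of_ne (hmin b hb.2) (Ne.symm hb.1)
      rw [card_filter_pair haS hb.2 hab hmin]
      have hc1 : (S.filter (fun x => a < x ∧ x < b)).card = pos b - 1 := by
        have : S.filter (· < b) = insert a (S.filter (fun x => a < x ∧ x < b)) := by
          ext x
          simp only [Finset.mem_filter, Finset.mem_insert]
          constructor
          · rintro ⟨hx, hxb⟩
            have := hmin x hx
            rcases eq_or_lt_of_le this with h | h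
            · exact Or.inl h.symm
            · exact Or.inr ⟨hx, h, hxb⟩
          · rintro (rfl | ⟨hx, -, hxb⟩)
            · exact ⟨haS, hab⟩
            · exact ⟨hx, hxb⟩
        have hna : a ∉ S.filter (fun x => a < x ∧ x < b) := by simp
        have hpb : pos b = (S.filter (· < b)).card := rfl
        rw [this, Finset.card_insert_of_notMem hna] at hpb
        omega
      have hc2 : (S.filter (fun x => b < x)).card = 2*n + 1 - pos b := by
        have hsplit := Finset.card_filter_add_card_filter_not
          (s := S) (p := (· < b))
        have : S.filter (fun x => ¬ x < b) = insert b (S.filter (fun x => b < x)) := by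
          ext x
          simp only [Finset.mem_filter, Finset.mem_insert, not_lt]
          constructor
          · rintro ⟨hx, hbx⟩
            rcases eq_or_lt_of_le hbx with h | h
            · exact Or.inl h.symm
            · exact Or.inr ⟨hx, h⟩
          · rintro (rfl | ⟨hx, hbx⟩)
            · exact ⟨hb.2, le_refl _⟩
            · exact ⟨hx, le_of_lt hbx⟩
        have hnb : b ∉ S.filter (fun x => b < x) := by simp
        rw [this, Finset.card_insert_of_notMem hnb, hS] at hsplit
        have := hlt b hb.2
        have hpb : pos b = (S.filter (· < b)).card := rfl
        omega
      have hble := hlt b hb.2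
      have hbge := hpos1 b (Finset.mem_erase.mpr hb)
      show _ = if Odd (pos b) then catalan (pos b / 2) * catalan (n - pos b / 2) else 0
      by_cases hodd : Odd (pos b)
      · obtain ⟨i, hi⟩ := hodd
        have hin : i ≤ n := by omega
        rw [IH i (by omega) _ (by omega), IH (n - i) (by omega) _ (by omega)]
        rw [if_pos ⟨i, hi⟩]
        congr 1 <;> congr 1 <;> omega
      · rw [if_neg hodd]
        have : Odd ((S.filter (fun x => a < x ∧ x < b)).card) := by
          rw [hc1]
          rcases Nat.even_or_odd (pos b) with h | h
          · obtain ⟨i, hi⟩ := h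
            exact ⟨i - 1, by omega⟩
          · exact absurd h hodd
        rw [NCM_eq_empty_of_odd this, Finset.card_empty, Nat.zero_mul]
    rw [card_NCM_eq_sum hne, ← ha, Finset.sum_congr rfl hfib]
    have e1 : ∑ b ∈ S.erase a,
        (fun j => if Odd j then catalan (j/2) * catalan (n - j/2) else 0) (pos b)
          = ∑ j ∈ Finset.Icc 1 (2*n+1),
              if Odd j then catalan (j/2) * catalan (n - j/2) else 0 := by
      rw [← himerase]
      exact (Finset.sum_image
        (f := fun j => if Odd j then catalan (j/2) * catalan (n - j/2) else 0) (g := pos)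
        (fun x hx y hy => hinj x (Finset.mem_of_mem_erase hx) y (Finset.mem_of_mem_erase hy))).symm
    have e2 : (∑ j ∈ Finset.Icc 1 (2*n+1),
          if Odd j then catalan (j/2) * catalan (n - j/2) else 0)
        = ∑ j ∈ (Finset.Icc 1 (2*n+1)).filter (fun j => Odd j),
            if Odd j then catalan (j/2) * catalan (n - j/2) else 0 := by
      symm
      apply Finset.sum_filter_of_ne
      intro x hx hne'
      by_contra h
      exact hne' (if_neg h)
    have hodds : (Finset.Icc 1 (2*n+1)).filter (fun j => Odd j)
        = Finset.image (fun i => 2*i+1) (Finset.range (n+1)) := by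
      ext j
      simp only [Finset.mem_filter, Finset.mem_Icc, Finset.mem_image, Finset.mem_range]
      constructor
      · rintro ⟨⟨h1, h2⟩, i, hi⟩
        exact ⟨i, by omega, by omega⟩
      · rintro ⟨i, hi, rfl⟩
        exact ⟨⟨by omega, by omega⟩, i, by omega⟩
    have e3 : (∑ j ∈ (Finset.Icc 1 (2*n+1)).filter (fun j => Odd j),
          if Odd j then catalan (j/2) * catalan (n - j/2) else 0)
        = ∑ i ∈ Finset.range (n+1),
            if Odd (2*i+1) then catalan ((2*i+1)/2) * catalan (n - (2*i+1)/2) else 0 := by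
      rw [hodds]
      exact Finset.sum_image
        (f := fun j => if Odd j then catalan (j/2) * catalan (n - j/2) else 0)
        (g := fun i => 2*i+1) (by intro x _ y _ h; have h' : 2*x+1 = 2*y+1 := h; omega)
    have e4 : (∑ i ∈ Finset.range (n+1),
          if Odd (2*i+1) then catalan ((2*i+1)/2) * catalan (n - (2*i+1)/2) else 0)
        = ∑ i ∈ Finset.range (n+1), catalan i * catalan (n - i) := by
      refine Finset.sum_congr rfl fun i hi => ?_
      rw [if_pos ⟨i, by omega⟩]
      congr 2 <;> omega
    rw [e1, e2, e3, e4, catalan_succ,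
      Fin.sum_univ_eq_sum_range (fun i => catalan i * catalan (n - i))]

lemma card_contract (S : Finset ℕ) (c d : ℕ) (hd : d = c + 1) (hc : c ∈ S) (hc1 : d ∈ S)
    (Q : Finset (Finset ℕ) → Prop) [DecidablePred Q]
    (hQ : ∀ P, Q (insert ({c, d} : Finset ℕ) P) ↔ Q P) :
    ((NCM S).filter (fun P => ({c, d} : Finset ℕ) ∈ P ∧ Q P)).card
      = ((NCM ((S.erase c).erase d)).filter (fun P => Q P)).card := by
  subst hd
  set V : Finset ℕ := {c, c+1} with hV
  set S' := (S.erase c).erase (c+1) with hS'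
  have hmemS' : ∀ {x}, x ∈ S' ↔ x ∈ S ∧ x ≠ c ∧ x ≠ c+1 := by
    intro x
    simp only [hS', Finset.mem_erase]
    tauto
  refine Finset.card_nbij' (fun P => P.erase V) (fun P => insert V P) ?_ ?_ ?_ ?_
  · -- forward maps to target
    intro P hP
    rw [Finset.mem_coe, Finset.mem_filter] at hP
    obtain ⟨hP, hVP, hQP⟩ := hP
    obtain ⟨hPM, hNC⟩ := mem_NCM.mp hP
    have hblocks : ∀ B ∈ P, B ≠ V → B ⊆ S' := by
      intro B hB hne x hx
      have hxS : x ∈ S := hPM.2.1 B hB hx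
      have hBV : x ∈ V → False := by
        intro hxV
        obtain ⟨U, -, hU⟩ := hPM.2.2 x hxS
        exact hne ((hU B ⟨hB, hx⟩).trans (hU V ⟨hVP, hxV⟩).symm)
      rw [hmemS']
      exact ⟨hxS, fun h => hBV (by simp [hV, h]), fun h => hBV (by simp [hV, h])⟩
    rw [Finset.mem_coe, Finset.mem_filter, mem_NCM]
    refine ⟨⟨⟨?_, ?_, ?_⟩, hNC.subset (Finset.erase_subset _ _)⟩, ?_⟩
    · exact fun B hB => hPM.1 B (Finset.mem_of_mem_erase hB)
    · intro B hB
      exact hblocks B (Finset.mem_of_mem_erase hB) (Finset.mem_erase.mp hB).1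
    · intro i hi
      obtain ⟨hiS, hic, hic1⟩ := hmemS'.mp hi
      obtain ⟨B, ⟨hB, hiB⟩, hU⟩ := hPM.2.2 i hiS
      have hBne : B ≠ V := by
        rintro rfl
        simp only [hV, Finset.mem_insert, Finset.mem_singleton] at hiB
        tauto
      exact ⟨B, ⟨Finset.mem_erase.mpr ⟨hBne, hB⟩, hiB⟩,
        fun C hC => hU C ⟨Finset.mem_of_mem_erase hC.1, hC.2⟩⟩
    · have : P = insert V (P.erase V) := (Finset.insert_erase hVP).symm
      rw [this] at hQP
      exact (hQ _).mp hQP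
  · -- backward maps to source
    intro P hP
    rw [Finset.mem_coe, Finset.mem_filter] at hP
    obtain ⟨hP, hQP⟩ := hP
    obtain ⟨hPM, hNC⟩ := mem_NCM.mp hP
    have hnotin : ∀ B ∈ P, c ∉ B ∧ c+1 ∉ B := by
      intro B hB
      constructor <;> intro h <;>
        [exact absurd (hmemS'.mp (hPM.2.1 B hB h)).2.1 (by simp);
         exact absurd (hmemS'.mp (hPM.2.1 B hB h)).2.2 (by simp)]
    rw [Finset.mem_coe, Finset.mem_filter, mem_NCM]
    refine ⟨⟨⟨?_, ?_, ?_⟩, ?_⟩, Finset.mem_insert_self _ _, (hQ _).mpr hQP⟩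
    · intro B hB
      rcases Finset.mem_insert.mp hB with rfl | hB
      · exact pair_card (by omega)
      · exact hPM.1 B hB
    · intro B hB
      rcases Finset.mem_insert.mp hB with rfl | hB
      · intro x hx
        simp only [hV, Finset.mem_insert, Finset.mem_singleton] at hx
        rcases hx with rfl | rfl <;> assumption
      · exact fun x hx => Finset.mem_of_mem_erase (Finset.mem_of_mem_erase (hPM.2.1 B hB hx))
    · intro i hi
      by_cases hic : i = c ∨ i = c + 1
      · refine ⟨V, ⟨Finset.mem_insert_self _ _, by
          rcases hic with rfl | rfl <;> simp [hV]⟩, ?_⟩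
        rintro B ⟨hB, hiB⟩
        rcases Finset.mem_insert.mp hB with rfl | hB
        · rfl
        · exfalso
          have := hnotin B hB
          rcases hic with rfl | rfl <;> tauto
      · push_neg at hic
        have hiS' : i ∈ S' := hmemS'.mpr ⟨hi, hic.1, hic.2⟩
        obtain ⟨B, ⟨hB, hiB⟩, hU⟩ := hPM.2.2 i hiS'
        refine ⟨B, ⟨Finset.mem_insert_of_mem hB, hiB⟩, ?_⟩
        rintro C ⟨hC, hiC⟩
        rcases Finset.mem_insert.mp hC with rfl | hC
        · exfalso
          simp only [hV, Finset.mem_insert, Finset.mem_singleton] at hiC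
          tauto
        · exact hU C ⟨hC, hiC⟩
    · -- noncrossing
      intro x y z w h1 h2 h3 hxz hyw
      rcases Finset.mem_insert.mp hxz with e1 | m1
      · obtain ⟨rfl, rfl⟩ := (pair_eq_pair_iff (by omega) (by omega : c < c+1)).mp e1
        omega
      · rcases Finset.mem_insert.mp hyw with e2 | m2
        · obtain ⟨rfl, rfl⟩ := (pair_eq_pair_iff (by omega) (by omega : c < c+1)).mp e2
          omega
        · exact hNC x y z w h1 h2 h3 m1 m2
  · -- left inverse
    intro P hP
    rw [Finset.mem_coe, Finset.mem_filter] at hP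
    exact Finset.insert_erase hP.2.1
  · -- right inverse
    intro P hP
    rw [Finset.mem_coe, Finset.mem_filter] at hP
    apply Finset.erase_insert
    intro hVP
    have := (mem_NCM.mp hP.1).1.2.1 V hVP (by simp [hV] : c ∈ V)
    exact absurd (hmemS'.mp this).2.1 (by simp)

lemma card_vertical (T : Finset ℕ) : ∀ (S : Finset ℕ) (n : ℕ), S.card = 2*n →
    T.card ≤ n → (∀ j ∈ T, 1 ≤ j) → (∀ j ∈ T, 2*j-1 ∈ S ∧ 2*j ∈ S) →
    ((NCM S).filter (fun P => ∀ j ∈ T, ({2*j-1, 2*j} : Finset ℕ) ∈ P)).card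
      = catalan (n - T.card) := by
  induction T using Finset.induction_on with
  | empty =>
    intro S n hcard _ _ _
    have : (NCM S).filter (fun P => ∀ j ∈ (∅ : Finset ℕ), ({2*j-1, 2*j} : Finset ℕ) ∈ P)
        = NCM S := Finset.filter_true_of_mem (fun P _ => by simp)
    rw [this, card_NCM n S hcard]
    simp
  | @insert j T hjT IH =>
    intro S n hcard hcardle h1 hmem
    have hj1 : 1 ≤ j := h1 j (Finset.mem_insert_self _ _)
    have hjS : 2*j-1 ∈ S ∧ 2*j ∈ S := hmem j (Finset.mem_insert_self _ _)
    have hTcard : (insert j T).card = T.card + 1 := Finset.card_insert_of_notMem hjT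
    have hn1 : 1 ≤ n := by omega
    have hfe : (NCM S).filter
          (fun P => ∀ i ∈ insert j T, ({2*i-1, 2*i} : Finset ℕ) ∈ P)
        = (NCM S).filter
          (fun P => ({2*j-1, 2*j} : Finset ℕ) ∈ P ∧
            ∀ i ∈ T, ({2*i-1, 2*i} : Finset ℕ) ∈ P) := by
      ext P
      simp only [Finset.mem_filter, Finset.forall_mem_insert]
    rw [hfe]
    rw [card_contract S (2*j-1) (2*j) (by omega) hjS.1 hjS.2
      (fun P => ∀ i ∈ T, ({2*i-1, 2*i} : Finset ℕ) ∈ P) ?_]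
    · set S' := (S.erase (2*j-1)).erase (2*j) with hS'
      have hScard : S'.card = 2*(n-1) := by
        rw [hS', Finset.card_erase_of_mem, Finset.card_erase_of_mem hjS.1, hcard]
        · omega
        · exact Finset.mem_erase.mpr ⟨by omega, hjS.2⟩
      rw [IH S' (n-1) hScard (by omega) (fun i hi => h1 i (Finset.mem_insert_of_mem hi)) ?_]
      · congr 1
        omega
      · intro i hi
        have hi1 : 1 ≤ i := h1 i (Finset.mem_insert_of_mem hi)
        have hij : i ≠ j := fun h => hjT (h ▸ hi)
        obtain ⟨hm1, hm2⟩ := hmem i (Finset.mem_insert_of_mem hi)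
        constructor
        · rw [hS']
          exact Finset.mem_erase.mpr ⟨by omega, Finset.mem_erase.mpr ⟨by omega, hm1⟩⟩
        · rw [hS']
          exact Finset.mem_erase.mpr ⟨by omega, Finset.mem_erase.mpr ⟨by omega, hm2⟩⟩
    · intro P
      constructor
      · intro h i hi
        have hi1 : 1 ≤ i := h1 i (Finset.mem_insert_of_mem hi)
        have hij : i ≠ j := fun h' => hjT (h' ▸ hi)
        rcases Finset.mem_insert.mp (h i hi) with heq | hP
        · exfalso
          have : 2*i ∈ ({2*j-1, 2*j} : Finset ℕ) := heq ▸ (by simp)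
          simp only [Finset.mem_insert, Finset.mem_singleton] at this
          omega
        · exact hP
      · intro h i hi
        exact Finset.mem_insert_of_mem (h i hi)

lemma incl_excl (k : ℕ) :
    (((NCM (Finset.Icc 1 (2*k))).filter
        (fun P => ∀ j ∈ Finset.Icc 1 k, ({2*j-1, 2*j} : Finset ℕ) ∉ P)).card : ℤ)
      = ∑ T ∈ (Finset.Icc 1 k).powerset, (-1 : ℤ)^T.card *
          (((NCM (Finset.Icc 1 (2*k))).filter
            (fun P => ∀ j ∈ T, ({2*j-1, 2*j} : Finset ℕ) ∈ P)).card : ℤ) := by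
  have hrhs : ∀ T ∈ (Finset.Icc 1 k).powerset,
      (-1:ℤ)^T.card * (((NCM (Finset.Icc 1 (2*k))).filter
          (fun P => ∀ j ∈ T, ({2*j-1,2*j}:Finset ℕ) ∈ P)).card : ℤ)
        = ∑ P ∈ NCM (Finset.Icc 1 (2*k)),
            ite (∀ j ∈ T, ({2*j-1,2*j}:Finset ℕ) ∈ P) ((-1:ℤ)^T.card) 0 := by
    intro T _
    rw [Finset.card_filter]
    push_cast
    rw [Finset.mul_sum]
    refine Finset.sum_congr rfl fun P _ => ?_
    rw [mul_ite, mul_one, mul_zero]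
  rw [Finset.sum_congr rfl hrhs, Finset.sum_comm]
  have hinner : ∀ P ∈ NCM (Finset.Icc 1 (2*k)),
      (∑ T ∈ (Finset.Icc 1 k).powerset,
          ite (∀ j ∈ T, ({2*j-1,2*j}:Finset ℕ) ∈ P) ((-1:ℤ)^T.card) 0)
        = ite (∀ j ∈ Finset.Icc 1 k, ({2*j-1,2*j}:Finset ℕ) ∉ P) 1 0 := by
    intro P _
    rw [← Finset.sum_filter]
    have hset : ((Finset.Icc 1 k).powerset).filter
          (fun T => ∀ j ∈ T, ({2*j-1,2*j}:Finset ℕ) ∈ P)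
        = ((Finset.Icc 1 k).filter (fun j => ({2*j-1,2*j}:Finset ℕ) ∈ P)).powerset := by
      ext T
      simp only [Finset.mem_filter, Finset.mem_powerset, Finset.subset_iff, Finset.mem_filter]
      constructor
      · rintro ⟨h1, h2⟩ x hx
        exact ⟨h1 hx, h2 x hx⟩
      · intro h
        exact ⟨fun x hx => (h hx).1, fun x hx => (h hx).2⟩
    rw [hset, Finset.sum_powerset_neg_one_pow_card]
    have : ((Finset.Icc 1 k).filter (fun j => ({2*j-1,2*j}:Finset ℕ) ∈ P) = ∅)
        ↔ (∀ j ∈ Finset.Icc 1 k, ({2*j-1,2*j}:Finset ℕ) ∉ P) := by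
      rw [Finset.filter_eq_empty_iff]
    exact if_congr this rfl rfl
  rw [Finset.sum_congr rfl hinner, Finset.card_filter]
  push_cast
  rfl

lemma comb_count (k : ℕ) :
    (((NCM (Finset.Icc 1 (2*k))).filter
        (fun P => ∀ j ∈ Finset.Icc 1 k, ({2*j-1, 2*j} : Finset ℕ) ∉ P)).card : ℤ)
      = ∑ m ∈ Finset.range (k+1), (-1:ℤ)^m * (k.choose m) * (catalan (k - m)) := by
  rw [incl_excl k]
  have hcardIcc : (Finset.Icc 1 (2*k)).card = 2*k := by
    rw [Nat.card_Icc]; omega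
  have hIcck : (Finset.Icc 1 k).card = k := by rw [Nat.card_Icc]; omega
  have hterm : ∀ T ∈ (Finset.Icc 1 k).powerset,
      (-1:ℤ)^T.card * (((NCM (Finset.Icc 1 (2*k))).filter
          (fun P => ∀ j ∈ T, ({2*j-1,2*j}:Finset ℕ) ∈ P)).card : ℤ)
        = (-1:ℤ)^T.card * (catalan (k - T.card) : ℤ) := by
    intro T hT
    rw [Finset.mem_powerset] at hT
    have hTle : T.card ≤ k := hIcck ▸ Finset.card_le_card hT
    rw [card_vertical T (Finset.Icc 1 (2*k)) k hcardIcc hTle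
      (fun j hj => (Finset.mem_Icc.mp (hT hj)).1)
      (fun j hj => by
        have := Finset.mem_Icc.mp (hT hj)
        constructor <;> (rw [Finset.mem_Icc]; omega))]
  rw [Finset.sum_congr rfl hterm]
  have := Finset.sum_powerset_apply_card
    (f := fun m => (-1:ℤ)^m * (catalan (k - m) : ℤ)) (x := Finset.Icc 1 k)
  rw [this, hIcck]
  refine Finset.sum_congr rfl fun m _ => ?_
  rw [nsmul_eq_mul]
  push_cast
  ring

/-- For `k ≥ 1`, the number of elements of `NC₂°(k)` equals
`(4/π) ∫₀^{π/2} (4 cos²θ - 1)^k sin²θ dθ`. -/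
theorem ncard_NCtwoCirc_eq_integral (k : ℕ) (hk : 1 ≤ k) :
    ((NCtwoCirc k).ncard : ℝ)
      = 4 / Real.pi *
          ∫ θ in (0:ℝ)..(Real.pi / 2),
            (4 * Real.cos θ ^ 2 - 1) ^ k * Real.sin θ ^ 2 := by
  have hsetEq : NCtwoCirc k = ↑((NCM (Finset.Icc 1 (2*k))).filter
      (fun P => ∀ j ∈ Finset.Icc 1 k, ({2*j-1, 2*j} : Finset ℕ) ∉ P)) := by
    ext P
    simp only [NCtwoCirc, Set.mem_setOf_eq, Finset.mem_coe, Finset.mem_filter, mem_NCM]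
    constructor
    · rintro ⟨hpm, hnc, hforb⟩
      refine ⟨⟨hpm, hnc⟩, fun j hj => ?_⟩
      have := Finset.mem_Icc.mp hj
      exact hforb j this.1 this.2
    · rintro ⟨⟨hpm, hnc⟩, hforb⟩
      exact ⟨hpm, hnc, fun j h1 h2 => hforb j (Finset.mem_Icc.mpr ⟨h1, h2⟩)⟩
  rw [hsetEq, Set.ncard_coe_finset, integral_eval k]
  have hA := comb_count k
  have hAR : ((((NCM (Finset.Icc 1 (2*k))).filter
        (fun P => ∀ j ∈ Finset.Icc 1 k, ({2*j-1, 2*j} : Finset ℕ) ∉ P)).card : ℕ) : ℝ)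
      = ∑ m ∈ Finset.range (k+1), (-1:ℝ)^m * (k.choose m) * (catalan (k - m)) := by
    exact_mod_cast hA
  rw [hAR]
  have hsum : ∑ m ∈ Finset.range (k+1), (-1:ℝ)^m * (k.choose m) * (catalan (k - m))
      = ∑ m ∈ Finset.range (k+1), (-1:ℝ)^(k-m) * (k.choose m) * (catalan m) := by
    rw [← Finset.sum_range_reflect (fun m => (-1:ℝ)^(k-m) * (k.choose m) * (catalan m)) (k+1)]
    refine Finset.sum_congr rfl fun j hj => ?_
    rw [Finset.mem_range] at hj
    have hjk : j ≤ k := by omega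
    have h1 : k + 1 - 1 - j = k - j := by omega
    rw [h1, Nat.sub_sub_self hjk, Nat.choose_symm hjk]
  rw [hsum]
  have hπ := Real.pi_ne_zero
  set X := ∑ m ∈ Finset.range (k+1), (-1:ℝ)^(k-m) * (k.choose m) * (catalan m) with hX
  rw [show (4:ℝ)/Real.pi * (Real.pi/4 * X) = X by field_simp]
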